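/- Let A₁A₂B₂B₁ be an ultraparallel trapezoid with A₁ ideal (decorated by a horocycle), A₂ ∈ ℍ², and angle π/2 at A₂. With signed lengths r₁ = |A₁B₁|, r₂ = |A₂B₂|, l₁₂ = |A₁A₂| (measured to the horocycle at A₁), and a₁₂ = |B₁B₂|, we have e^{r₁} = sinh(r₂)·e^{l₁₂} and tanh(a₁₂) = 1/cosh(r₂). -/
import Mathlib


/-- The Minkowski bilinear form on `ℝ^{1,2}`. -/
def mink (x y : Fin 3 → ℝ) : ℝ := -(x 0 * y 0) + x 1 * y 1 + x 2 * y 2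

lemma mink_comm (x y : Fin 3 → ℝ) : mink x y = mink y x := by unfold mink; ring

lemma mink_add_left (x y z : Fin 3 → ℝ) : mink (x + y) z = mink x z + mink y z := by
  simp [mink]; ring

lemma mink_add_right (x y z : Fin 3 → ℝ) : mink x (y + z) = mink x y + mink x z := by
  simp [mink]; ring

lemma mink_smul_left (a : ℝ) (x y : Fin 3 → ℝ) : mink (a • x) y = a * mink x y := by
  simp [mink]; ring

lemma mink_smul_right (a : ℝ) (x y : Fin 3 → ℝ) : mink x (a • y) = a * mink x y := by
  simp [mink]; ring

/-- Lambert quadrilateral formulas for an ultraparallel trapezoid with one ideal vertex.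
`m` is a unit space-like normal to the lower line, `B₁, B₂` lie on the lower line, the upper
vertex `A₁` is the ideal point with future light-like polar vector `l₁` of its decorating
horocycle, projecting orthogonally to `B₁` (i.e. `l₁` is a positive multiple of `B₁ + m`),
and `A₂ = cosh r₂ • B₂ + sinh r₂ • m` with `r₂ > 0`.  The signed lengths are measured to the
horocycle: `⟨B₁, l₁⟩ = -e^{r₁}`, `⟨A₂, l₁⟩ = -e^{l₁₂}`; the angle of the trapezoid at `A₂` is
`π/2` (the tangent toward the ideal point `A₁` is orthogonal to the lateral-edge tangent).
Then `e^{r₁} = sinh r₂ · e^{l₁₂}` and `tanh a₁₂ = 1 / cosh r₂`. -/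
theorem lambert_trapezoid_ideal_vertex
    (m B₁ B₂ l₁ : Fin 3 → ℝ) (r₁ r₂ l₁₂ a₁₂ : ℝ)
    (hm : mink m m = 1)
    (hB₁ : mink B₁ B₁ = -1) (hB₁0 : 0 < B₁ 0) (hB₁m : mink B₁ m = 0)
    (hB₂ : mink B₂ B₂ = -1) (hB₂0 : 0 < B₂ 0) (hB₂m : mink B₂ m = 0)
    (hl₁ : mink l₁ l₁ = 0) (hl₁0 : 0 < l₁ 0)
    (hproj : ∃ c : ℝ, 0 < c ∧ l₁ = c • (B₁ + m))
    (hr₂ : 0 < r₂)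
    (A₂ : Fin 3 → ℝ)
    (hA₂ : A₂ = Real.cosh r₂ • B₂ + Real.sinh r₂ • m)
    (hr₁ : mink B₁ l₁ = -Real.exp r₁)
    (hl₁₂ : mink A₂ l₁ = -Real.exp l₁₂)
    (ha : 0 ≤ a₁₂) (halen : Real.cosh a₁₂ = -(mink B₁ B₂))
    (hangle : mink (l₁ + (mink l₁ A₂) • A₂) (Real.sinh r₂ • B₂ + Real.cosh r₂ • m) = 0) :
    Real.exp r₁ = Real.sinh r₂ * Real.exp l₁₂ ∧
    Real.tanh a₁₂ = 1 / Real.cosh r₂ := by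
  obtain ⟨c, hc0, hcB⟩ := hproj
  have hmB₁ : mink m B₁ = 0 := by rw [mink_comm]; exact hB₁m
  have hmB₂ : mink m B₂ = 0 := by rw [mink_comm]; exact hB₂m
  have hb : mink B₁ B₂ = -Real.cosh a₁₂ := by linarith
  have hB₂B₁ : mink B₂ B₁ = -Real.cosh a₁₂ := by rw [mink_comm]; exact hb
  -- c = exp r₁
  have hce : c = Real.exp r₁ := by
    rw [hcB] at hr₁
    rw [mink_smul_right, mink_add_right, hB₁, hB₁m] at hr₁
    linarith
  -- value of mink A₂ l₁
  have hA₂l₁ : mink A₂ l₁ = c * (Real.sinh r₂ - Real.cosh r₂ * Real.cosh a₁₂) := by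
    rw [hA₂, hcB]
    simp only [mink_add_left, mink_add_right, mink_smul_left, mink_smul_right,
      hB₂B₁, hB₂m, hmB₁, hm]
    ring
  -- the angle condition gives cosh r₂ = sinh r₂ * cosh a₁₂
  have hA₂T : mink A₂ (Real.sinh r₂ • B₂ + Real.cosh r₂ • m) = 0 := by
    rw [hA₂]
    simp only [mink_add_left, mink_add_right, mink_smul_left, mink_smul_right,
      hB₂, hB₂m, hmB₂, hm]
    ring
  have hl₁T : mink l₁ (Real.sinh r₂ • B₂ + Real.cosh r₂ • m)
      = c * (Real.cosh r₂ - Real.sinh r₂ * Real.cosh a₁₂) := by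
    rw [hcB]
    simp only [mink_add_left, mink_add_right, mink_smul_left, mink_smul_right,
      hb, hB₁m, hmB₂, hm]
    ring
  rw [mink_add_left, mink_smul_left, hA₂T, hl₁T] at hangle
  have hkey : Real.cosh r₂ = Real.sinh r₂ * Real.cosh a₁₂ := by
    have h0 : c * (Real.cosh r₂ - Real.sinh r₂ * Real.cosh a₁₂) = 0 := by linarith
    rcases mul_eq_zero.mp h0 with h | h
    · exact absurd h (ne_of_gt hc0)
    · linarith
  have hsh : 0 < Real.sinh r₂ := Real.sinh_pos_iff.mpr hr₂
  have hch : 0 < Real.cosh r₂ := Real.cosh_pos r₂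
  have h1 : Real.cosh a₁₂ ^ 2 = Real.sinh a₁₂ ^ 2 + 1 := Real.cosh_sq a₁₂
  have h2 : Real.cosh r₂ ^ 2 = Real.sinh r₂ ^ 2 + 1 := Real.cosh_sq r₂
  have hkey2 : Real.cosh r₂ ^ 2 = Real.sinh r₂ ^ 2 * Real.cosh a₁₂ ^ 2 := by
    rw [hkey]; ring
  have hsq : Real.sinh a₁₂ ^ 2 * Real.sinh r₂ ^ 2 = 1 := by
    linear_combination (-(Real.sinh r₂ ^ 2)) * h1 - hkey2 + h2
  have hsa0 : 0 ≤ Real.sinh a₁₂ := Real.sinh_nonneg_iff.mpr ha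
  have hx : Real.sinh a₁₂ * Real.sinh r₂ = 1 := by
    have hf : (Real.sinh a₁₂ * Real.sinh r₂ - 1) * (Real.sinh a₁₂ * Real.sinh r₂ + 1) = 0 := by
      linear_combination hsq
    rcases mul_eq_zero.mp hf with h | h
    · linarith
    · nlinarith [mul_nonneg hsa0 hsh.le]
  constructor
  · -- exp r₁ = sinh r₂ * exp l₁₂
    rw [hA₂l₁] at hl₁₂
    have hchca : Real.cosh r₂ * Real.cosh a₁₂ - Real.sinh r₂
        = Real.sinh r₂ * Real.sinh a₁₂ ^ 2 := by
      rw [hkey]; linear_combination Real.sinh r₂ * h1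
    have hel : Real.exp l₁₂ = c * (Real.sinh r₂ * Real.sinh a₁₂ ^ 2) := by
      linear_combination hl₁₂ + c * hchca
    rw [hel, ← hce]
    linear_combination (-c) * hsq
  · rw [Real.tanh_eq_sinh_div_cosh]
    have hsa : Real.sinh a₁₂ = 1 / Real.sinh r₂ := by
      rw [eq_div_iff hsh.ne']; exact hx
    have hca : Real.cosh a₁₂ = Real.cosh r₂ / Real.sinh r₂ := by
      rw [eq_div_iff hsh.ne']; linear_combination -hkey
    rw [hsa, hca]
    rw [div_div_div_eq, one_mul, mul_comm]
    rw [mul_comm, ← div_div, div_self hsh.ne']
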